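/- arXiv:2105.13014 — 4 statements merged into one kernel-verified Lean document; each statement's English description precedes it below -/
import Mathlib

section
/- Let E be a real Hilbert space, T > 0, N a positive integer, τ := T/N, and t_k := kτ for k = 0,1,…,N. Let x : ℝ → E be continuous on [0,T] and differentiable on [0,T] with derivative x′ such that s ↦ ‖x′(s)‖² is integrable on [0,T]. Then Σ_{k=1}^N ∫_{t_{k−1}}^{t_k} ‖x(t) − x(t_k)‖² dt ≤ (τ²/2) · ∫_0^T ‖x′(s)‖² ds. -/
open MeasureTheory Set

/-- `x'` is a.e. strongly measurable on `[0,T]`, being a.e. equal to the (measurable)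
right derivative `t ↦ derivWithin x (Ici t) t`. -/
lemma aux_meas {E : Type*} [NormedAddCommGroup E] [NormedSpace ℝ E] [CompleteSpace E]
    (T : ℝ) (hT : 0 < T) (x x' : ℝ → E)
    (hx' : ∀ t ∈ Icc (0 : ℝ) T, HasDerivWithinAt x (x' t) (Icc 0 T) t) :
    AEStronglyMeasurable x' (volume.restrict (Icc 0 T)) := by
  have hmeas : StronglyMeasurable fun t => derivWithin x (Ici t) t :=
    stronglyMeasurable_derivWithin_Ici x
  refine hmeas.aestronglyMeasurable.congr ?_
  have : ∀ᵐ t ∂(volume.restrict (Icc 0 T)), t ∈ Ico (0 : ℝ) T := by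
    rw [ae_iff, Measure.restrict_apply' measurableSet_Icc]
    refine measure_mono_null (fun y hy => ?_) (measure_singleton T)
    simp only [mem_inter_iff, mem_setOf_eq, mem_Ico, not_and, not_lt, mem_Icc,
      mem_singleton_iff] at *
    exact le_antisymm hy.2.2 (hy.1 hy.2.1)
  filter_upwards [this] with t ht
  have htT : t ∈ Icc (0 : ℝ) T := ⟨ht.1, ht.2.le⟩
  have h1 : HasDerivWithinAt x (x' t) (Ici t) t := by
    refine (hx' t htT).mono_of_mem_nhdsWithin ?_
    have : Ico t T ∈ nhdsWithin t (Ici t) := by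
      refine mem_nhdsWithin.2 ⟨Iio T, isOpen_Iio, ht.2, ?_⟩
      intro y hy
      exact ⟨hy.2, hy.1⟩
    exact Filter.mem_of_superset this (fun y hy => ⟨ht.1.trans hy.1, hy.2.le⟩)
  exact h1.derivWithin (uniqueDiffOn_Ici t t Set.self_mem_Ici)

/-- Cauchy–Schwarz: `(∫_t^b ‖x'‖)^2 ≤ (b - t) * ∫_t^b ‖x'‖^2`. -/
lemma aux_cs {E : Type*} [NormedAddCommGroup E]
    (x' : ℝ → E) (t b : ℝ) (htb : t ≤ b)
    (hmeas : AEStronglyMeasurable x' (volume.restrict (Ioc t b)))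
    (hsq : IntegrableOn (fun s => ‖x' s‖ ^ 2) (Ioc t b)) :
    (∫ s in t..b, ‖x' s‖) ^ 2 ≤ (b - t) * ∫ s in t..b, ‖x' s‖ ^ 2 := by
  have h2 : ((2 : ℝ)).HolderConjugate 2 := by
    constructor <;> norm_num
  set μ := volume.restrict (Ioc t b) with hμ
  have hnorm : AEStronglyMeasurable (fun s => ‖x' s‖) μ := hmeas.norm
  have hf2 : MemLp (fun s => ‖x' s‖) (ENNReal.ofReal 2) μ := by
    rw [show ENNReal.ofReal 2 = 2 by norm_num]
    refine (memLp_two_iff_integrable_sq (hnorm.aemeasurable.aestronglyMeasurable)).2 ?_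
    simpa [sq_abs, IntegrableOn] using hsq
  have hg2 : MemLp (fun _ : ℝ => (1 : ℝ)) (ENNReal.ofReal 2) μ := by
    refine memLp_const 1
  have := integral_mul_le_Lp_mul_Lq_of_nonneg h2
    (f := fun s => ‖x' s‖) (g := fun _ => (1 : ℝ)) (μ := μ)
    (Filter.Eventually.of_forall fun s => norm_nonneg _)
    (Filter.Eventually.of_forall fun _ => zero_le_one) hf2 hg2
  have hpow : ∀ s : ℝ, ‖x' s‖ ^ (2 : ℝ) = ‖x' s‖ ^ 2 := fun s => by
    rw [show (2:ℝ) = ((2:ℕ):ℝ) by norm_num, Real.rpow_natCast]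
  simp only [mul_one, Real.one_rpow, hpow] at this
  have hμint : ∫ _ : ℝ, (1 : ℝ) ∂μ = b - t := by
    simp [hμ, Real.volume_Ioc, ENNReal.toReal_ofReal (sub_nonneg.2 htb), htb]
  rw [hμint] at this
  have hA : 0 ≤ ∫ s, ‖x' s‖ ^ 2 ∂μ :=
    integral_nonneg fun s => sq_nonneg _
  have hI1 : ∫ s in t..b, ‖x' s‖ = ∫ s, ‖x' s‖ ∂μ := by
    rw [intervalIntegral.integral_of_le htb]
  have hI2 : ∫ s in t..b, ‖x' s‖ ^ 2 = ∫ s, ‖x' s‖ ^ 2 ∂μ := by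
    rw [intervalIntegral.integral_of_le htb]
  rw [hI1, hI2]
  calc (∫ s, ‖x' s‖ ∂μ) ^ 2
      ≤ ((∫ s, ‖x' s‖ ^ 2 ∂μ) ^ (1/2 : ℝ) * (b - t) ^ (1/2 : ℝ)) ^ 2 := by
        apply pow_le_pow_left₀ (integral_nonneg fun s => norm_nonneg _)
        convert this using 3 <;> norm_num
    _ = (b - t) * ∫ s, ‖x' s‖ ^ 2 ∂μ := by
        rw [mul_pow, ← Real.rpow_natCast ((∫ s, ‖x' s‖ ^ 2 ∂μ) ^ (1/2 : ℝ)) 2,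
          ← Real.rpow_natCast ((b - t) ^ (1/2 : ℝ)) 2,
          ← Real.rpow_mul hA, ← Real.rpow_mul (sub_nonneg.2 htb)]
        norm_num
        ring

/-- Key single-interval estimate. -/
lemma aux_key {E : Type*} [NormedAddCommGroup E] [InnerProductSpace ℝ E] [CompleteSpace E]
    (T : ℝ) (hT : 0 < T)
    (x x' : ℝ → E)
    (hxc : ContinuousOn x (Icc 0 T))
    (hx' : ∀ t ∈ Icc (0 : ℝ) T, HasDerivWithinAt x (x' t) (Icc 0 T) t)
    (hint : IntegrableOn (fun s => ‖x' s‖ ^ 2) (Icc 0 T))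
    (hx'int : IntegrableOn x' (Icc 0 T))
    (a b : ℝ) (ha : 0 ≤ a) (hab : a ≤ b) (hbT : b ≤ T) :
    ∫ t in a..b, ‖x t - x b‖ ^ 2 ≤ (b - a) ^ 2 / 2 * ∫ s in a..b, ‖x' s‖ ^ 2 := by
  have hsub : Icc a b ⊆ Icc 0 T := Icc_subset_Icc ha hbT
  set C := ∫ s in a..b, ‖x' s‖ ^ 2 with hC
  have hCnn : 0 ≤ C :=
    intervalIntegral.integral_nonneg hab (fun s _ => sq_nonneg _)
  have hgInt : IntervalIntegrable (fun s => ‖x' s‖ ^ 2) volume a b := by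
    apply MeasureTheory.IntegrableOn.intervalIntegrable
    apply hint.mono_set
    rw [uIcc_of_le hab]; exact hsub
  -- pointwise bound
  have key : ∀ t ∈ Icc a b, ‖x t - x b‖ ^ 2 ≤ (b - t) * C := by
    intro t ht
    have htb : t ≤ b := ht.2
    have ht0 : 0 ≤ t := ha.trans ht.1
    have hsub2 : Icc t b ⊆ Icc 0 T := Icc_subset_Icc ht0 hbT
    have hx'i : IntervalIntegrable x' volume t b := by
      apply MeasureTheory.IntegrableOn.intervalIntegrable
      apply hx'int.mono_set
      rw [uIcc_of_le htb]; exact hsub2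
    have hftc : ∫ s in t..b, x' s = x b - x t := by
      apply intervalIntegral.integral_eq_sub_of_hasDeriv_right_of_le htb
        (hxc.mono hsub2) ?_ hx'i
      intro s hs
      have hs' : s ∈ Icc (0:ℝ) T := ⟨ht0.trans hs.1.le, hs.2.le.trans hbT⟩
      have hsnhds : Icc (0:ℝ) T ∈ nhds s := by
        apply Icc_mem_nhds (lt_of_le_of_lt ht0 hs.1) (lt_of_lt_of_le hs.2 hbT)
      exact ((hx' s hs').hasDerivAt hsnhds).hasDerivWithinAt
    have hnorm : ‖x t - x b‖ ≤ ∫ s in t..b, ‖x' s‖ := by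
      rw [show x t - x b = -(x b - x t) by abel, norm_neg, ← hftc]
      exact intervalIntegral.norm_integral_le_integral_norm htb
    have hcs : (∫ s in t..b, ‖x' s‖) ^ 2 ≤ (b - t) * ∫ s in t..b, ‖x' s‖ ^ 2 := by
      apply aux_cs x' t b htb
      · exact (aux_meas T hT x x' hx').mono_measure
          (Measure.restrict_mono (fun y hy => hsub2 ⟨hy.1.le, hy.2⟩) le_rfl)
      · exact hint.mono_set (fun y hy => hsub2 ⟨hy.1.le, hy.2⟩)
    have hmono : (∫ s in t..b, ‖x' s‖ ^ 2) ≤ C := by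
      apply intervalIntegral.integral_mono_interval ht.1 htb le_rfl
      · filter_upwards with s; positivity
      · exact hgInt
    calc ‖x t - x b‖ ^ 2 ≤ (∫ s in t..b, ‖x' s‖) ^ 2 := by
          apply pow_le_pow_left₀ (norm_nonneg _) hnorm
      _ ≤ (b - t) * ∫ s in t..b, ‖x' s‖ ^ 2 := hcs
      _ ≤ (b - t) * C := by
          apply mul_le_mul_of_nonneg_left hmono (sub_nonneg.2 htb)
  -- integrate the pointwise bound
  have hLHSint : IntervalIntegrable (fun t => ‖x t - x b‖ ^ 2) volume a b := by
    apply ContinuousOn.intervalIntegrable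
    rw [uIcc_of_le hab]
    exact (((hxc.mono hsub).sub continuousOn_const).norm).pow 2
  have hRHSint : IntervalIntegrable (fun t => (b - t) * C) volume a b := by
    apply ContinuousOn.intervalIntegrable
    exact (Continuous.continuousOn (by continuity))
  have hmono2 : ∫ t in a..b, ‖x t - x b‖ ^ 2 ≤ ∫ t in a..b, (b - t) * C := by
    apply intervalIntegral.integral_mono_on hab hLHSint hRHSint key
  have hcomp : ∫ t in a..b, (b - t) * C = (b - a) ^ 2 / 2 * C := by
    have : (fun t : ℝ => (b - t) * C) = fun t => b * C - t * C := by
      funext t; ring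
    rw [this, intervalIntegral.integral_sub intervalIntegrable_const
      ((intervalIntegral.intervalIntegrable_id).mul_const C),
      intervalIntegral.integral_const, intervalIntegral.integral_mul_const,
      integral_id]
    simp only [smul_eq_mul]
    ring
  calc ∫ t in a..b, ‖x t - x b‖ ^ 2 ≤ ∫ t in a..b, (b - t) * C := hmono2
    _ = (b - a) ^ 2 / 2 * C := hcomp

/-- Lemma 3.3 (ii), L²-in-time bound for the piecewise constant interpolant. -/
theorem piecewise_constant_interpolant_l2_bound
    {E : Type*} [NormedAddCommGroup E] [InnerProductSpace ℝ E] [CompleteSpace E]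
    (T : ℝ) (hT : 0 < T) (N : ℕ) (hN : 0 < N) (τ : ℝ) (hτ : τ = T / N)
    (x x' : ℝ → E)
    (hxc : ContinuousOn x (Icc 0 T))
    (hx' : ∀ t ∈ Icc (0 : ℝ) T, HasDerivWithinAt x (x' t) (Icc 0 T) t)
    (hint : IntegrableOn (fun s => ‖x' s‖ ^ 2) (Icc 0 T)) :
    ∑ k ∈ Finset.Icc 1 N,
        ∫ t in ((((k : ℝ) - 1)) * τ)..((k : ℝ) * τ), ‖x t - x ((k : ℝ) * τ)‖ ^ 2 ≤
      τ ^ 2 / 2 * ∫ s in (0 : ℝ)..T, ‖x' s‖ ^ 2 := by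
  have hNpos : (0 : ℝ) < N := Nat.cast_pos.2 hN
  have hτpos : 0 < τ := by rw [hτ]; positivity
  have hNτ : (N : ℝ) * τ = T := by rw [hτ]; field_simp
  -- integrability of x'
  have hx'int : IntegrableOn x' (Icc 0 T) := by
    have hmeas := aux_meas T hT x x' hx'
    have hbound : Integrable (fun s => 1 + ‖x' s‖ ^ 2) (volume.restrict (Icc 0 T)) := by
      exact (integrable_const 1).add hint
    refine hbound.mono' hmeas ?_
    filter_upwards with s
    have := sq_nonneg (‖x' s‖ - 1)
    nlinarith [norm_nonneg (x' s)]
  -- per-interval bound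
  have hterm : ∀ k ∈ Finset.Icc 1 N,
      (∫ t in ((((k : ℝ) - 1)) * τ)..((k : ℝ) * τ), ‖x t - x ((k : ℝ) * τ)‖ ^ 2)
        ≤ τ ^ 2 / 2 * ∫ s in ((((k : ℝ) - 1)) * τ)..((k : ℝ) * τ), ‖x' s‖ ^ 2 := by
    intro k hk
    rw [Finset.mem_Icc] at hk
    have hk1 : (1 : ℝ) ≤ (k : ℝ) := by exact_mod_cast hk.1
    have hkN : (k : ℝ) ≤ (N : ℝ) := by exact_mod_cast hk.2
    have ha : 0 ≤ ((k : ℝ) - 1) * τ := by nlinarith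
    have hab : ((k : ℝ) - 1) * τ ≤ (k : ℝ) * τ := by nlinarith
    have hbT : (k : ℝ) * τ ≤ T := by nlinarith
    have := aux_key T hT x x' hxc hx' hint hx'int (((k : ℝ) - 1) * τ) ((k : ℝ) * τ)
      ha hab hbT
    convert this using 2
    ring
  -- sum up
  calc ∑ k ∈ Finset.Icc 1 N,
        ∫ t in ((((k : ℝ) - 1)) * τ)..((k : ℝ) * τ), ‖x t - x ((k : ℝ) * τ)‖ ^ 2
      ≤ ∑ k ∈ Finset.Icc 1 N,
          τ ^ 2 / 2 * ∫ s in ((((k : ℝ) - 1)) * τ)..((k : ℝ) * τ), ‖x' s‖ ^ 2 :=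
        Finset.sum_le_sum hterm
    _ = τ ^ 2 / 2 * ∑ k ∈ Finset.Icc 1 N,
          ∫ s in ((((k : ℝ) - 1)) * τ)..((k : ℝ) * τ), ‖x' s‖ ^ 2 := by
        rw [Finset.mul_sum]
    _ = τ ^ 2 / 2 * ∫ s in (0 : ℝ)..T, ‖x' s‖ ^ 2 := by
        congr 1
        have hadj : ∀ i < N, IntervalIntegrable (fun s => ‖x' s‖ ^ 2) volume
            ((i : ℝ) * τ) (((i : ℝ) + 1) * τ) := by
          intro i hi
          apply MeasureTheory.IntegrableOn.intervalIntegrable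
          apply hint.mono_set
          have h1 : 0 ≤ (i : ℝ) * τ := by positivity
          have h2 : ((i : ℝ) + 1) * τ ≤ T := by
            have : (i : ℝ) + 1 ≤ (N : ℝ) := by exact_mod_cast hi
            nlinarith
          rw [uIcc_of_le (by nlinarith)]
          exact Icc_subset_Icc h1 h2
        have hsum := intervalIntegral.sum_integral_adjacent_intervals
          (f := fun s => ‖x' s‖ ^ 2) (μ := volume) (a := fun i => (i : ℝ) * τ)
          (n := N) (by intro k hk; simpa using hadj k hk)
        simp only [Nat.cast_zero, zero_mul] at hsum
        rw [hNτ] at hsum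
        rw [← hsum]
        rw [← Finset.Ico_add_one_right_eq_Icc, Finset.sum_Ico_eq_sum_range]
        apply Finset.sum_congr (by simp)
        intro i _
        congr 1 <;> push_cast <;> ring
end

section
/- Let E be a real Banach space, T > 0, N a positive integer, τ := T/N, and t_k := kτ for k = 0,1,…,N. Let x : ℝ → E be twice continuously differentiable on [0,T], with first derivative x′ and second derivative x″. Then Σ_{k=1}^N τ · ‖x′(t_k) − (x(t_k) − x(t_{k−1}))/τ‖² ≤ (τ²/3) · ∫_0^T ‖x″(s)‖² ds. -/
open MeasureTheory Set

lemma taylor_ident {E : Type*} [NormedAddCommGroup E] [NormedSpace ℝ E] [CompleteSpace E]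
    (T : ℝ) (x x' x'' : ℝ → E)
    (hx' : ∀ t ∈ Icc (0 : ℝ) T, HasDerivWithinAt x (x' t) (Icc 0 T) t)
    (hx'' : ∀ t ∈ Icc (0 : ℝ) T, HasDerivWithinAt x' (x'' t) (Icc 0 T) t)
    (hc' : ContinuousOn x' (Icc 0 T))
    (hc'' : ContinuousOn x'' (Icc 0 T))
    (a b : ℝ) (hab : a < b) (ha : 0 ≤ a) (hb : b ≤ T) :
    (b - a) • x' b - (x b - x a) = ∫ s in a..b, (s - a) • x'' s := by
  have hsub : Icc a b ⊆ Icc 0 T := Icc_subset_Icc ha hb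
  have hcx : ContinuousOn x (Icc 0 T) := fun t ht => (hx' t ht).continuousWithinAt
  have hint : IntervalIntegrable (fun s => (s - a) • x'' s) volume a b := by
    apply ContinuousOn.intervalIntegrable
    rw [uIcc_of_le hab.le]
    exact (continuousOn_id.sub continuousOn_const).smul (hc''.mono hsub)
  have key := intervalIntegral.integral_eq_sub_of_hasDeriv_right_of_le hab.le
    (f := fun s => (s - a) • x' s - x s) (f' := fun s => (s - a) • x'' s)
    (by exact ((continuousOn_id.sub continuousOn_const).smul (hc'.mono hsub)).sub (hcx.mono hsub))
    (fun s hs => by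
      have hsmem : s ∈ Icc (0:ℝ) T := hsub (Ioo_subset_Icc_self hs)
      have hnhds : Icc (0:ℝ) T ∈ nhds s := by
        apply Icc_mem_nhds (lt_of_le_of_lt ha hs.1) (lt_of_lt_of_le hs.2 hb)
      have h1 : HasDerivAt x' (x'' s) s := (hx'' s hsmem).hasDerivAt hnhds
      have h2 : HasDerivAt x (x' s) s := (hx' s hsmem).hasDerivAt hnhds
      have : HasDerivAt (fun u => (u - a) • x' u - x u) ((s-a) • x'' s) s := by
        have := (((hasDerivAt_id s).sub_const a).smul h1).sub h2
        convert this using 1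
        · rfl
        · simp
      exact this.hasDerivWithinAt) hint
  rw [key]
  simp only [sub_self, zero_smul, zero_sub, sub_neg_eq_add]
  abel

lemma key_interval {E : Type*} [NormedAddCommGroup E] [NormedSpace ℝ E] [CompleteSpace E]
    (T : ℝ) (x x' x'' : ℝ → E)
    (hx' : ∀ t ∈ Icc (0 : ℝ) T, HasDerivWithinAt x (x' t) (Icc 0 T) t)
    (hx'' : ∀ t ∈ Icc (0 : ℝ) T, HasDerivWithinAt x' (x'' t) (Icc 0 T) t)
    (hc' : ContinuousOn x' (Icc 0 T))
    (hc'' : ContinuousOn x'' (Icc 0 T))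
    (a b : ℝ) (hab : a < b) (ha : 0 ≤ a) (hb : b ≤ T) :
    (b - a) * ‖x' b - (b - a)⁻¹ • (x b - x a)‖ ^ 2 ≤
      (b - a) ^ 2 / 3 * ∫ s in a..b, ‖x'' s‖ ^ 2 := by
  have hsub : Icc a b ⊆ Icc 0 T := Icc_subset_Icc ha hb
  have hτ : (0:ℝ) < b - a := sub_pos.mpr hab
  set D : E := (b - a) • x' b - (x b - x a) with hD
  have hre : x' b - (b - a)⁻¹ • (x b - x a) = (b - a)⁻¹ • D := by
    rw [hD, smul_sub ((b - a)⁻¹) ((b - a) • x' b) (x b - x a), inv_smul_smul₀ hτ.ne']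
  have hbound : ‖D‖ ≤ ∫ s in a..b, (s - a) * ‖x'' s‖ := by
    rw [hD, taylor_ident T x x' x'' hx' hx'' hc' hc'' a b hab ha hb]
    refine le_trans (intervalIntegral.norm_integral_le_integral_norm hab.le) ?_
    refine le_of_eq (intervalIntegral.integral_congr fun s hs => ?_)
    rw [uIcc_of_le hab.le] at hs
    rw [norm_smul, Real.norm_of_nonneg (sub_nonneg.mpr hs.1)]
  set I : ℝ := ∫ s in a..b, ‖x'' s‖ ^ 2 with hI
  have hInn : 0 ≤ I := by
    rw [hI]
    apply intervalIntegral.integral_nonneg hab.le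
    intro s _; positivity
  -- Cauchy-Schwarz
  have hCS : (∫ s in a..b, (s - a) * ‖x'' s‖) ≤
      Real.sqrt ((b - a) ^ 3 / 3) * Real.sqrt I := by
    have h22 : Real.HolderConjugate 2 2 := Real.HolderConjugate.two_two
    haveI : IsFiniteMeasure (volume.restrict (Ioc a b)) := by
      constructor
      rw [Measure.restrict_apply_univ, Real.volume_Ioc]
      exact ENNReal.ofReal_lt_top
    have hmf : MemLp (fun s => s - a) (ENNReal.ofReal 2) (volume.restrict (Ioc a b)) := by
      apply MemLp.of_bound ((continuous_id.sub continuous_const).aestronglyMeasurable) (b - a)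
      filter_upwards [ae_restrict_mem measurableSet_Ioc] with s hs
      simp only [Pi.sub_apply, id_eq]
      rw [Real.norm_of_nonneg (sub_nonneg.mpr hs.1.le)]
      linarith [hs.2]
    have hmg : MemLp (fun s => ‖x'' s‖) (ENNReal.ofReal 2) (volume.restrict (Ioc a b)) := by
      obtain ⟨C, hC⟩ := (isCompact_Icc (a := (0:ℝ)) (b := T)).exists_bound_of_continuousOn hc''
      have hmeas : AEStronglyMeasurable (fun s => ‖x'' s‖) (volume.restrict (Ioc a b)) := by
        have := hc''.norm.aestronglyMeasurable (μ := volume) measurableSet_Icc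
        exact this.mono_measure (Measure.restrict_mono (Ioc_subset_Icc_self.trans hsub) le_rfl)
      apply MemLp.of_bound hmeas C
      filter_upwards [ae_restrict_mem measurableSet_Ioc] with s hs
      rw [norm_norm]
      exact hC s (hsub (Ioc_subset_Icc_self hs))
    have hCS0 := integral_mul_le_Lp_mul_Lq_of_nonneg h22
      (f := fun s => s - a) (g := fun s => ‖x'' s‖)
      (by filter_upwards [ae_restrict_mem measurableSet_Ioc] with s hs
          simpa using sub_nonneg.mpr hs.1.le)
      (Filter.Eventually.of_forall fun s => norm_nonneg _) hmf hmg
    simp only [show (2:ℝ) = ((2:ℕ):ℝ) by norm_num, Real.rpow_natCast] at hCS0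
    push_cast at hCS0
    have e1 : ∫ s in Ioc a b, (s - a) * ‖x'' s‖ = ∫ s in a..b, (s - a) * ‖x'' s‖ :=
      (intervalIntegral.integral_of_le hab.le).symm
    have e2 : ∫ s in Ioc a b, (s - a) ^ (2:ℕ) = (b - a) ^ 3 / 3 := by
      rw [← intervalIntegral.integral_of_le hab.le,
        intervalIntegral.integral_comp_sub_right (fun u => u ^ (2:ℕ)) a]
      simp [integral_pow]
      norm_num
    have e3 : ∫ s in Ioc a b, ‖x'' s‖ ^ (2:ℕ) = I := by
      rw [hI, intervalIntegral.integral_of_le hab.le]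
    rw [e1, e2, e3] at hCS0
    calc (∫ s in a..b, (s - a) * ‖x'' s‖)
        ≤ ((b - a) ^ 3 / 3) ^ ((1:ℝ)/2) * I ^ ((1:ℝ)/2) := hCS0
      _ = Real.sqrt ((b - a) ^ 3 / 3) * Real.sqrt I := by
          rw [← Real.sqrt_eq_rpow, ← Real.sqrt_eq_rpow]
  -- conclude
  have hD2 : ‖D‖ ^ 2 ≤ (b - a) ^ 3 / 3 * I := by
    have h1 : ‖D‖ ≤ Real.sqrt ((b - a) ^ 3 / 3) * Real.sqrt I := hbound.trans hCS
    have h2 : ‖D‖ ^ 2 ≤ (Real.sqrt ((b - a) ^ 3 / 3) * Real.sqrt I) ^ 2 :=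
      pow_le_pow_left₀ (norm_nonneg _) h1 2
    calc ‖D‖ ^ 2 ≤ (Real.sqrt ((b - a) ^ 3 / 3) * Real.sqrt I) ^ 2 := h2
      _ = (b - a) ^ 3 / 3 * I := by
          rw [mul_pow, Real.sq_sqrt (by positivity), Real.sq_sqrt hInn]
  rw [hre, norm_smul, Real.norm_of_nonneg (inv_nonneg.mpr hτ.le), mul_pow]
  calc (b - a) * (((b - a)⁻¹) ^ 2 * ‖D‖ ^ 2)
      ≤ (b - a) * (((b - a)⁻¹) ^ 2 * ((b - a) ^ 3 / 3 * I)) := by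
        apply mul_le_mul_of_nonneg_left _ hτ.le
        exact mul_le_mul_of_nonneg_left hD2 (by positivity)
    _ = (b - a) ^ 2 / 3 * I := by field_simp

/-- Lemma 3.2 (i): L² bound for the consistency error of the backward
difference quotient. -/
theorem consistency_error_l2_bound
    {E : Type*} [NormedAddCommGroup E] [NormedSpace ℝ E] [CompleteSpace E]
    (T : ℝ) (hT : 0 < T) (N : ℕ) (hN : 0 < N) (τ : ℝ) (hτ : τ = T / N)
    (x x' x'' : ℝ → E)
    (hx' : ∀ t ∈ Icc (0 : ℝ) T, HasDerivWithinAt x (x' t) (Icc 0 T) t)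
    (hx'' : ∀ t ∈ Icc (0 : ℝ) T, HasDerivWithinAt x' (x'' t) (Icc 0 T) t)
    (hc' : ContinuousOn x' (Icc 0 T))
    (hc'' : ContinuousOn x'' (Icc 0 T)) :
    ∑ k ∈ Finset.Icc 1 N,
        τ * ‖x' ((k : ℝ) * τ) - τ⁻¹ • (x ((k : ℝ) * τ) - x (((k : ℝ) - 1) * τ))‖ ^ 2 ≤
      τ ^ 2 / 3 * ∫ s in (0 : ℝ)..T, ‖x'' s‖ ^ 2 := by
  have hNpos : (0:ℝ) < N := Nat.cast_pos.mpr hN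
  have hτpos : 0 < τ := by rw [hτ]; exact div_pos hT hNpos
  have hNτ : (N:ℝ) * τ = T := by rw [hτ]; field_simp
  have hbmem : ∀ i : ℕ, i < N → ((i:ℝ) + 1) * τ ≤ T := by
    intro i hi
    rw [← hNτ]
    apply mul_le_mul_of_nonneg_right _ hτpos.le
    have : (i:ℝ) + 1 ≤ N := by exact_mod_cast Nat.succ_le_of_lt hi
    exact this
  have hterm : ∀ i ∈ Finset.range N,
      τ * ‖x' ((((1+i:ℕ)):ℝ) * τ) - τ⁻¹ • (x ((((1+i:ℕ)):ℝ) * τ) -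
          x (((((1+i:ℕ)):ℝ) - 1) * τ))‖ ^ 2 ≤
        τ ^ 2 / 3 * ∫ s in ((i:ℝ) * τ)..(((i:ℝ) + 1) * τ), ‖x'' s‖ ^ 2 := by
    intro i hi
    rw [Finset.mem_range] at hi
    have ha : (0:ℝ) ≤ (i:ℝ) * τ := by positivity
    have hab : (i:ℝ) * τ < ((i:ℝ) + 1) * τ := by nlinarith
    have key := key_interval T x x' x'' hx' hx'' hc' hc''
      ((i:ℝ) * τ) (((i:ℝ) + 1) * τ) hab ha (hbmem i hi)
    have hba : ((i:ℝ) + 1) * τ - (i:ℝ) * τ = τ := by ring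
    rw [hba] at key
    have hc1 : (((1+i:ℕ)):ℝ) = (i:ℝ) + 1 := by push_cast; ring
    rw [hc1, show ((i:ℝ) + 1 - 1) = (i:ℝ) by ring]
    exact key
  rw [← Finset.Ico_add_one_right_eq_Icc, Finset.sum_Ico_eq_sum_range,
    show N + 1 - 1 = N from Nat.succ_sub_one N]
  have hintk : ∀ k < N, IntervalIntegrable (fun s => ‖x'' s‖ ^ 2) volume
      ((k:ℝ) * τ) (((k+1:ℕ):ℝ) * τ) := by
    intro k hk
    apply ContinuousOn.intervalIntegrable
    apply (hc''.norm.pow 2).mono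
    rw [uIcc_of_le (by push_cast; nlinarith)]
    apply Icc_subset_Icc (by positivity)
    push_cast
    exact hbmem k hk
  calc ∑ i ∈ Finset.range N,
        τ * ‖x' ((((1+i:ℕ)):ℝ) * τ) - τ⁻¹ • (x ((((1+i:ℕ)):ℝ) * τ) -
          x (((((1+i:ℕ)):ℝ) - 1) * τ))‖ ^ 2
      ≤ ∑ i ∈ Finset.range N, τ ^ 2 / 3 * ∫ s in ((i:ℝ) * τ)..(((i:ℝ) + 1) * τ), ‖x'' s‖ ^ 2 :=
        Finset.sum_le_sum hterm
    _ = τ ^ 2 / 3 * ∑ i ∈ Finset.range N, ∫ s in ((i:ℝ) * τ)..(((i:ℝ) + 1) * τ), ‖x'' s‖ ^ 2 := by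
        rw [Finset.mul_sum]
    _ = τ ^ 2 / 3 * ∫ s in (0:ℝ)..T, ‖x'' s‖ ^ 2 := by
        congr 1
        have := intervalIntegral.sum_integral_adjacent_intervals
          (a := fun i : ℕ => (i:ℝ) * τ) (f := fun s => ‖x'' s‖ ^ 2) (n := N) hintk
        simp only [Nat.cast_zero, zero_mul] at this
        rw [← hNτ, ← this]
        apply Finset.sum_congr rfl
        intro i _
        congr 1
        push_cast
        ring
end

section
/- Let E be a real Banach space, T > 0, N a positive integer with N ≥ 2, τ := T/N, and t_k := kτ for k = 0,1,…,N. Let x : ℝ → E be three times continuously differentiable on [0,T], with derivatives x′, x″ and x‴. For k = 1,2,…,N define R_k := x′(t_k) − (x(t_k) − x(t_{k−1}))/τ. Then for every k = 2,3,…,N, ‖(R_k − R_{k−1})/τ‖ ≤ √(τ/3) · (∫_{t_{k−2}}^{t_k} ‖x‴(s)‖² ds)^{1/2}. -/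
open MeasureTheory Set

/-- Cauchy–Schwarz for interval integrals of a nonnegative continuous function. -/
lemma cs_interval {f : ℝ → ℝ} {p q : ℝ} (hpq : p ≤ q)
    (hf : ContinuousOn f (Icc p q)) (hnn : ∀ s ∈ Icc p q, 0 ≤ f s) :
    ∫ s in p..q, f s ≤ Real.sqrt (q - p) * Real.sqrt (∫ s in p..q, f s ^ 2) := by
  have hIcc : IsCompact (Icc p q) := isCompact_Icc
  obtain ⟨C, hC⟩ := hIcc.exists_bound_of_continuousOn hf
  set μ : Measure ℝ := volume.restrict (Ioc p q) with hμ
  have hfin : IsFiniteMeasure μ := by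
    constructor
    rw [hμ, Measure.restrict_apply_univ]
    exact measure_Ioc_lt_top
  have hmeas : AEStronglyMeasurable f μ :=
    (hf.mono Ioc_subset_Icc_self).aestronglyMeasurable measurableSet_Ioc
  have hae : ∀ᵐ s ∂μ, s ∈ Ioc p q := by
    rw [hμ, ae_restrict_iff' measurableSet_Ioc]
    exact Filter.Eventually.of_forall fun _ h => h
  have hmem : MemLp f (ENNReal.ofReal 2) μ := by
    refine MemLp.of_bound hmeas C ?_
    filter_upwards [hae] with s hs
    exact hC s (Ioc_subset_Icc_self hs)
  have hmem1 : MemLp (fun _ : ℝ => (1 : ℝ)) (ENNReal.ofReal 2) μ := memLp_const 1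
  have hconj : Real.HolderConjugate 2 2 := Real.HolderConjugate.two_two
  have hnn' : 0 ≤ᵐ[μ] f := by
    filter_upwards [hae] with s hs; exact hnn s (Ioc_subset_Icc_self hs)
  have h1nn : 0 ≤ᵐ[μ] (fun _ : ℝ => (1 : ℝ)) :=
    Filter.Eventually.of_forall fun _ => zero_le_one
  have key := MeasureTheory.integral_mul_le_Lp_mul_Lq_of_nonneg hconj hnn' h1nn hmem hmem1
  have h2 : ∀ s : ℝ, f s ^ (2 : ℝ) = f s ^ 2 := fun s => by
    rw [show (2:ℝ) = ((2:ℕ):ℝ) by norm_num, Real.rpow_natCast]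
  have h1 : ∀ s : ℝ, (1:ℝ) ^ (2:ℝ) = (1:ℝ) := fun s => Real.one_rpow 2
  simp only [mul_one, h2, h1, Real.one_rpow, one_pow] at key
  have hμuniv : ∫ _ : ℝ, (1:ℝ) ∂μ = q - p := by
    simp only [hμ, integral_const, smul_eq_mul, mul_one, Measure.restrict_apply_univ,
      Real.volume_Ioc]
    rw [Measure.real, Measure.restrict_apply_univ, Real.volume_Ioc]
    exact ENNReal.toReal_ofReal (by linarith)
  rw [intervalIntegral.integral_of_le hpq, intervalIntegral.integral_of_le hpq]
  calc ∫ s in Ioc p q, f s = ∫ s, f s ∂μ := rfl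
    _ ≤ (∫ s, f s ^ 2 ∂μ) ^ (1/(2:ℝ)) * (∫ _ : ℝ, (1:ℝ) ∂μ) ^ (1/(2:ℝ)) := key
    _ = (∫ s, f s ^ 2 ∂μ) ^ (1/(2:ℝ)) * (q - p) ^ (1/(2:ℝ)) := by rw [hμuniv]
    _ = Real.sqrt (q - p) * Real.sqrt (∫ s in Ioc p q, f s ^ 2) := by
        rw [← Real.sqrt_eq_rpow, ← Real.sqrt_eq_rpow, mul_comm]

/-- Fundamental theorem of calculus on a subinterval of `[0, T]`. -/
lemma ftc_simple {E : Type*} [NormedAddCommGroup E] [NormedSpace ℝ E] [CompleteSpace E]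
    {T : ℝ} {g g' : ℝ → E}
    (hg : ∀ t ∈ Icc (0:ℝ) T, HasDerivWithinAt g (g' t) (Icc 0 T) t)
    (hcg' : ContinuousOn g' (Icc 0 T))
    {p q : ℝ} (h0 : 0 ≤ p) (hpq : p ≤ q) (hqT : q ≤ T) :
    ∫ s in p..q, g' s = g q - g p := by
  have hsub : Icc p q ⊆ Icc 0 T := Icc_subset_Icc h0 hqT
  have hcg : ContinuousOn g (Icc 0 T) := fun t ht => (hg t ht).continuousWithinAt
  refine intervalIntegral.integral_eq_sub_of_hasDeriv_right_of_le hpq (hcg.mono hsub)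
    (fun u hu => ?_) ?_
  · have huT : u ∈ Ioo (0:ℝ) T := ⟨lt_of_le_of_lt h0 hu.1, lt_of_lt_of_le hu.2 hqT⟩
    have hn : Icc (0:ℝ) T ∈ nhds u := Icc_mem_nhds huT.1 huT.2
    exact ((hg u (hsub (Ioo_subset_Icc_self hu))).hasDerivAt hn).hasDerivWithinAt
  · apply ContinuousOn.intervalIntegrable
    rw [uIcc_of_le hpq]
    exact hcg'.mono hsub

/-- Weighted FTC: `∫_b^c (u-b) • x''(u) du = (c-b) • x'(c) - (x(c) - x(b))`. -/
lemma ftc_weighted {E : Type*} [NormedAddCommGroup E] [NormedSpace ℝ E] [CompleteSpace E]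
    {T : ℝ} {x x' x'' : ℝ → E}
    (hx' : ∀ t ∈ Icc (0:ℝ) T, HasDerivWithinAt x (x' t) (Icc 0 T) t)
    (hx'' : ∀ t ∈ Icc (0:ℝ) T, HasDerivWithinAt x' (x'' t) (Icc 0 T) t)
    (hc' : ContinuousOn x' (Icc 0 T)) (hc'' : ContinuousOn x'' (Icc 0 T))
    {b c : ℝ} (h0b : 0 ≤ b) (hbc : b ≤ c) (hcT : c ≤ T) :
    ∫ u in b..c, (u - b) • x'' u = (c - b) • x' c - (x c - x b) := by
  have hsub : Icc b c ⊆ Icc 0 T := Icc_subset_Icc h0b hcT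
  have hcx : ContinuousOn x (Icc 0 T) := fun t ht => (hx' t ht).continuousWithinAt
  set F : ℝ → E := fun u => (u - b) • x' u - x u with hF
  have hFc : ContinuousOn F (Icc b c) :=
    ((continuousOn_id.sub continuousOn_const).smul (hc'.mono hsub)).sub (hcx.mono hsub)
  have hint : IntervalIntegrable (fun u => (u - b) • x'' u) volume b c := by
    apply ContinuousOn.intervalIntegrable
    rw [uIcc_of_le hbc]
    exact (continuousOn_id.sub continuousOn_const).smul (hc''.mono hsub)
  have hderiv : ∀ u ∈ Ioo b c, HasDerivAt F ((u - b) • x'' u) u := by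
    intro u hu
    have huIcc : u ∈ Icc (0:ℝ) T := hsub (Ioo_subset_Icc_self hu)
    have huT : u ∈ Ioo (0:ℝ) T := ⟨lt_of_le_of_lt h0b hu.1, lt_of_lt_of_le hu.2 hcT⟩
    have hn : Icc (0:ℝ) T ∈ nhds u := Icc_mem_nhds huT.1 huT.2
    have h1 : HasDerivAt x (x' u) u := (hx' u huIcc).hasDerivAt hn
    have h2 : HasDerivAt x' (x'' u) u := (hx'' u huIcc).hasDerivAt hn
    have h3 : HasDerivAt (fun v : ℝ => v - b) 1 u := (hasDerivAt_id u).sub_const b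
    have h4 := (h3.smul h2).sub h1
    convert h4 using 1
    · rfl
    rw [one_smul]
    abel
  have heq := intervalIntegral.integral_eq_sub_of_hasDeriv_right_of_le hbc hFc
      (fun u hu => (hderiv u hu).hasDerivWithinAt) hint
  rw [heq]
  simp only [hF, sub_self, zero_smul, zero_sub]
  abel
/-- Per-index estimate from the proof of Lemma 3.2 (ii). -/
theorem consistency_error_difference_single
    {E : Type*} [NormedAddCommGroup E] [NormedSpace ℝ E] [CompleteSpace E]
    (T : ℝ) (hT : 0 < T) (N : ℕ) (hN : 2 ≤ N) (τ : ℝ) (hτ : τ = T / N)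
    (x x' x'' x''' : ℝ → E)
    (hx' : ∀ t ∈ Icc (0 : ℝ) T, HasDerivWithinAt x (x' t) (Icc 0 T) t)
    (hx'' : ∀ t ∈ Icc (0 : ℝ) T, HasDerivWithinAt x' (x'' t) (Icc 0 T) t)
    (hx''' : ∀ t ∈ Icc (0 : ℝ) T, HasDerivWithinAt x'' (x''' t) (Icc 0 T) t)
    (hc' : ContinuousOn x' (Icc 0 T))
    (hc'' : ContinuousOn x'' (Icc 0 T))
    (hc''' : ContinuousOn x''' (Icc 0 T))
    (R : ℕ → E)
    (hR : ∀ k, 1 ≤ k → k ≤ N →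
      R k = x' ((k : ℝ) * τ) - τ⁻¹ • (x ((k : ℝ) * τ) - x (((k : ℝ) - 1) * τ)))
    (k : ℕ) (hk2 : 2 ≤ k) (hkN : k ≤ N) :
    ‖τ⁻¹ • (R k - R (k - 1))‖ ≤
      Real.sqrt (τ / 3) *
        Real.sqrt (∫ s in (((k : ℝ) - 2) * τ)..((k : ℝ) * τ), ‖x''' s‖ ^ 2) := by
  have hNpos : (0:ℝ) < (N:ℝ) := by exact_mod_cast Nat.pos_of_ne_zero (by omega)
  have hτpos : 0 < τ := by rw [hτ]; positivity
  have hk2R : (2:ℝ) ≤ (k:ℝ) := by exact_mod_cast hk2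
  have hkNR : (k:ℝ) ≤ (N:ℝ) := by exact_mod_cast hkN
  set a : ℝ := ((k:ℝ) - 2) * τ with ha
  set b : ℝ := ((k:ℝ) - 1) * τ with hb
  set c : ℝ := (k:ℝ) * τ with hc
  have h0a : 0 ≤ a := by rw [ha]; nlinarith [hτpos.le]
  have hab : a + τ = b := by rw [ha, hb]; ring
  have hbc : b + τ = c := by rw [hb, hc]; ring
  have hcT : c ≤ T := by
    have hNT : (N:ℝ) * τ = T := by rw [hτ]; field_simp
    rw [hc]; nlinarith [hτpos.le]
  have h0b : 0 ≤ b := by linarith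
  have haleb : a ≤ b := by linarith
  have hblec : b ≤ c := by linarith
  have hbT : b ≤ T := by linarith
  -- R formulas
  have hRk := hR k (by omega) hkN
  have hRk1 := hR (k-1) (by omega) (by omega)
  have hcast : ((k - 1 : ℕ) : ℝ) = (k:ℝ) - 1 := by
    rw [Nat.cast_sub (by omega), Nat.cast_one]
  rw [hcast, show (k:ℝ) - 1 - 1 = (k:ℝ) - 2 by ring, ← ha, ← hb] at hRk1
  rw [← hb, ← hc] at hRk
  -- integral identities
  have I1 : ∫ u in b..c, (u - b) • x'' u = τ • x' c - (x c - x b) := by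
    rw [ftc_weighted hx' hx'' hc' hc'' h0b hblec hcT, show c - b = τ by linarith]
  have I2 : ∫ u in a..b, (u - a) • x'' u = τ • x' b - (x b - x a) := by
    rw [ftc_weighted hx' hx'' hc' hc'' h0a haleb hbT, show b - a = τ by linarith]
  have hshift : ∫ u in a..b, (u - a) • x'' u = ∫ u in b..c, (u - b) • x'' (u - τ) := by
    have h1 : ∀ u : ℝ, u - τ - a = u - b := fun u => by linarith
    calc ∫ u in a..b, (u - a) • x'' u
        = ∫ u in (b - τ)..(c - τ), (u - a) • x'' u := by
          rw [show b - τ = a by linarith, show c - τ = b by linarith]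
      _ = ∫ u in b..c, (u - τ - a) • x'' (u - τ) :=
          (intervalIntegral.integral_comp_sub_right (fun u => (u - a) • x'' u) τ).symm
      _ = ∫ u in b..c, (u - b) • x'' (u - τ) := by simp only [h1]
  -- integrability on [b, c]
  have hsubbc : Icc b c ⊆ Icc 0 T := Icc_subset_Icc h0b hcT
  have hmaps : ∀ u ∈ Icc b c, u - τ ∈ Icc (0:ℝ) T := fun u hu =>
    ⟨by linarith [hu.1], by linarith [hu.2]⟩
  have hcont1 : ContinuousOn (fun u => (u - b) • x'' u) (Icc b c) :=
    (continuousOn_id.sub continuousOn_const).smul (hc''.mono hsubbc)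
  have hcont2 : ContinuousOn (fun u => (u - b) • x'' (u - τ)) (Icc b c) :=
    (continuousOn_id.sub continuousOn_const).smul
      (hc''.comp ((continuous_id.sub continuous_const).continuousOn) hmaps)
  have hint1 : IntervalIntegrable (fun u => (u - b) • x'' u) volume b c := by
    apply ContinuousOn.intervalIntegrable; rwa [uIcc_of_le hblec]
  have hint2 : IntervalIntegrable (fun u => (u - b) • x'' (u - τ)) volume b c := by
    apply ContinuousOn.intervalIntegrable; rwa [uIcc_of_le hblec]
  have key : R k - R (k-1) = τ⁻¹ • ∫ u in b..c, (u - b) • (x'' u - x'' (u - τ)) := by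
    have hsplit : ∫ u in b..c, (u - b) • (x'' u - x'' (u - τ))
        = (∫ u in b..c, (u - b) • x'' u) - ∫ u in b..c, (u - b) • x'' (u - τ) := by
      rw [← intervalIntegral.integral_sub hint1 hint2]
      simp only [smul_sub]
    rw [hsplit, ← hshift, I1, I2, hRk, hRk1]
    have hττ : τ⁻¹ * τ = 1 := inv_mul_cancel₀ hτpos.ne'
    simp only [smul_sub, smul_smul, hττ, one_smul]
  rw [key, smul_smul]
  set M : ℝ := Real.sqrt (∫ s in a..c, ‖x''' s‖^2) with hM
  have hMnn : 0 ≤ M := Real.sqrt_nonneg _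
  -- integrability of ‖x'''‖² on Ioc a c
  have hIacT : Icc a c ⊆ Icc (0:ℝ) T := Icc_subset_Icc h0a hcT
  have hintM : IntegrableOn (fun s => ‖x''' s‖^2) (Ioc a c) volume := by
    apply IntegrableOn.mono_set ?_ Ioc_subset_Icc_self
    exact (((hc'''.mono hIacT).norm).pow 2).integrableOn_compact isCompact_Icc
  -- pointwise bound
  have hpt : ∀ u ∈ Icc b c, ‖x'' u - x'' (u - τ)‖ ≤ Real.sqrt τ * M := by
    intro u hu
    have h0u : (0:ℝ) ≤ u - τ := by linarith [hu.1]
    have hau : a ≤ u - τ := by linarith [hu.1]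
    have huc : u ≤ c := hu.2
    have huT : u ≤ T := le_trans huc hcT
    have hdiff : x'' u - x'' (u - τ) = ∫ s in (u-τ)..u, x''' s :=
      (ftc_simple hx''' hc''' h0u (by linarith) huT).symm
    rw [hdiff]
    have hsubu : Icc (u - τ) u ⊆ Icc (0:ℝ) T := Icc_subset_Icc h0u huT
    calc ‖∫ s in (u-τ)..u, x''' s‖ ≤ ∫ s in (u-τ)..u, ‖x''' s‖ :=
        intervalIntegral.norm_integral_le_integral_norm (by linarith)
      _ ≤ Real.sqrt (u - (u - τ)) * Real.sqrt (∫ s in (u-τ)..u, ‖x''' s‖^2) :=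
        cs_interval (by linarith) ((hc'''.mono hsubu).norm) (fun s _ => norm_nonneg _)
      _ ≤ Real.sqrt τ * M := by
        rw [show u - (u - τ) = τ by ring]
        refine mul_le_mul_of_nonneg_left ?_ (Real.sqrt_nonneg τ)
        refine Real.sqrt_le_sqrt ?_
        rw [intervalIntegral.integral_of_le (by linarith : u - τ ≤ u),
          intervalIntegral.integral_of_le (by linarith : a ≤ c)]
        refine setIntegral_mono_set hintM ?_ ((Ioc_subset_Ioc hau huc).eventuallyLE)
        exact Filter.Eventually.of_forall fun s => by positivity
  -- norm of the integral
  have hw : ∫ u in b..c, (u - b) = τ^2/2 := by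
    rw [intervalIntegral.integral_sub intervalIntegral.intervalIntegrable_id (intervalIntegrable_const (c := b)),
      integral_id, intervalIntegral.integral_const]
    have hcb : c = b + τ := by linarith
    rw [hcb]; ring_nf
  have hcontD : ContinuousOn (fun u => (u - b) • (x'' u - x'' (u - τ))) (Icc b c) :=
    (continuousOn_id.sub continuousOn_const).smul ((hc''.mono hsubbc).sub
      (hc''.comp ((continuous_id.sub continuous_const).continuousOn) hmaps))
  have hintD : IntervalIntegrable (fun u => (u - b) • (x'' u - x'' (u - τ))) volume b c := by
    apply ContinuousOn.intervalIntegrable; rwa [uIcc_of_le hblec]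
  have hintDn : IntervalIntegrable (fun u => ‖(u - b) • (x'' u - x'' (u - τ))‖) volume b c :=
    hintD.norm
  have hintlin : IntervalIntegrable (fun u => (u - b) * (Real.sqrt τ * M)) volume b c := by
    apply ContinuousOn.intervalIntegrable
    exact (continuousOn_id.sub continuousOn_const).mul continuousOn_const
  have hnormint : ‖∫ u in b..c, (u - b) • (x'' u - x'' (u - τ))‖
      ≤ Real.sqrt τ * M * (τ^2/2) := by
    calc ‖∫ u in b..c, (u - b) • (x'' u - x'' (u - τ))‖
        ≤ ∫ u in b..c, ‖(u - b) • (x'' u - x'' (u - τ))‖ :=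
          intervalIntegral.norm_integral_le_integral_norm hblec
      _ ≤ ∫ u in b..c, (u - b) * (Real.sqrt τ * M) := by
          refine intervalIntegral.integral_mono_on hblec hintDn hintlin fun u hu => ?_
          rw [norm_smul, Real.norm_eq_abs, abs_of_nonneg (by linarith [hu.1])]
          exact mul_le_mul_of_nonneg_left (hpt u hu) (by linarith [hu.1])
      _ = Real.sqrt τ * M * (τ^2/2) := by
          rw [intervalIntegral.integral_mul_const, hw]; ring
  -- finish
  rw [norm_smul, Real.norm_eq_abs, abs_of_pos (by positivity)]
  have hτne : τ ≠ 0 := hτpos.ne'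
  calc τ⁻¹ * τ⁻¹ * ‖∫ u in b..c, (u - b) • (x'' u - x'' (u - τ))‖
      ≤ τ⁻¹ * τ⁻¹ * (Real.sqrt τ * M * (τ^2/2)) := by
        refine mul_le_mul_of_nonneg_left hnormint (by positivity)
    _ = Real.sqrt τ / 2 * M := by field_simp
    _ ≤ Real.sqrt (τ/3) * M := by
        refine mul_le_mul_of_nonneg_right ?_ hMnn
        have h4 : Real.sqrt (τ/4) = Real.sqrt τ / 2 := by
          rw [show τ/4 = τ * (1/2)^2 by ring, Real.sqrt_mul hτpos.le,
            Real.sqrt_sq (by norm_num : (0:ℝ) ≤ 1/2)]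
          ring
        rw [← h4]
        exact Real.sqrt_le_sqrt (by linarith)
end

section
/- Let E be a real Banach space, T > 0, N a positive integer with N ≥ 2, τ := T/N, and t_k := kτ for k = 0,1,…,N. Let x : ℝ → E be three times continuously differentiable on [0,T], with derivatives x′, x″ and x‴. For k = 1,2,…,N define R_k := x′(t_k) − (x(t_k) − x(t_{k−1}))/τ. Then Σ_{k=2}^N τ · ‖(R_k − R_{k−1})/τ‖² ≤ (2/3) · τ² · ∫_0^T ‖x‴(s)‖² ds. -/
open MeasureTheory Set intervalIntegral

section aux
variable {E : Type*} [NormedAddCommGroup E] [NormedSpace ℝ E] [CompleteSpace E]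

/-- FTC on subintervals of [0,T] from derivatives within Icc 0 T. -/
lemma ftc_sub {T : ℝ} (g g' : ℝ → E)
    (hg : ∀ t ∈ Icc (0:ℝ) T, HasDerivWithinAt g (g' t) (Icc 0 T) t)
    (hc : ContinuousOn g' (Icc 0 T))
    {a b : ℝ} (ha : 0 ≤ a) (hab : a ≤ b) (hb : b ≤ T) :
    ∫ s in a..b, g' s = g b - g a := by
  have hsub : Icc a b ⊆ Icc 0 T := Icc_subset_Icc ha hb
  apply integral_eq_sub_of_hasDeriv_right_of_le hab
  · exact fun t ht => ((hg t (hsub ht)).continuousWithinAt).mono hsub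
  · intro t ht
    have h0T : t ∈ Ioo (0:ℝ) T := ⟨lt_of_le_of_lt ha ht.1, lt_of_lt_of_le ht.2 hb⟩
    exact ((hg t (Ioo_subset_Icc_self h0T)).hasDerivAt
      (Icc_mem_nhds h0T.1 h0T.2)).hasDerivWithinAt
  · exact (hc.mono hsub).intervalIntegrable_of_Icc hab

/-- Cauchy–Schwarz for interval integrals of continuous functions. -/
lemma cs_interval_s9 {a b : ℝ} (hab : a ≤ b) {u v : ℝ → ℝ}
    (hu : ContinuousOn u (Icc a b)) (hv : ContinuousOn v (Icc a b)) :
    (∫ s in a..b, u s * v s) ^ 2 ≤ (∫ s in a..b, u s ^ 2) * ∫ s in a..b, v s ^ 2 := by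
  set A := ∫ s in a..b, u s ^ 2 with hA
  set B := ∫ s in a..b, u s * v s with hB
  set C := ∫ s in a..b, v s ^ 2 with hC
  have huv : IntervalIntegrable (fun s => u s * v s) volume a b :=
    (hu.mul hv).intervalIntegrable_of_Icc hab
  have hu2 : IntervalIntegrable (fun s => u s ^ 2) volume a b :=
    (hu.pow 2).intervalIntegrable_of_Icc hab
  have hv2 : IntervalIntegrable (fun s => v s ^ 2) volume a b :=
    (hv.pow 2).intervalIntegrable_of_Icc hab
  have key : ∀ t : ℝ, 0 ≤ t ^ 2 * A + 2 * t * B + C := by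
    intro t
    have h0 : 0 ≤ ∫ s in a..b, (t * u s + v s) ^ 2 :=
      intervalIntegral.integral_nonneg hab (fun s _ => sq_nonneg _)
    have heq : ∫ s in a..b, (t * u s + v s) ^ 2
        = t ^ 2 * A + 2 * t * B + C := by
      have : (fun s => (t * u s + v s) ^ 2)
          = fun s => t ^ 2 * u s ^ 2 + (2 * t) * (u s * v s) + v s ^ 2 := by
        funext s; ring
      rw [this, intervalIntegral.integral_add (((hu2.const_mul _).add (huv.const_mul _))) hv2,
        intervalIntegral.integral_add (hu2.const_mul _) (huv.const_mul _),
        intervalIntegral.integral_const_mul, intervalIntegral.integral_const_mul]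
    linarith [heq ▸ h0]
  have hA0 : 0 ≤ A := intervalIntegral.integral_nonneg hab (fun s _ => sq_nonneg _)
  have hC0 : 0 ≤ C := intervalIntegral.integral_nonneg hab (fun s _ => sq_nonneg _)
  rcases eq_or_lt_of_le hA0 with h | h
  · have hB0 : B = 0 := by
      by_contra hB0
      have hk := key (-(C + 1) / (2 * B))
      rw [← h, mul_zero, zero_add] at hk
      have h2 : 2 * (-(C + 1) / (2 * B)) * B = -(C + 1) := by field_simp
      rw [h2] at hk; linarith
    rw [hB0, ← h]; norm_num
  · have hk := key (-B / A)
    have hAne : A ≠ 0 := ne_of_gt h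
    have expand : (-B / A) ^ 2 * A + 2 * (-B / A) * B + C = -(B ^ 2) / A + C := by
      field_simp; ring
    rw [expand] at hk
    rw [neg_div, neg_add_eq_sub, sub_nonneg, div_le_iff₀ h] at hk
    linarith [hk]
end aux

section ident
variable {E : Type*} [NormedAddCommGroup E] [NormedSpace ℝ E] [CompleteSpace E]
variable {T : ℝ} {x x' x'' x''' : ℝ → E}

lemma aux2 (hx' : ∀ t ∈ Icc (0 : ℝ) T, HasDerivWithinAt x (x' t) (Icc 0 T) t)
    (hx'' : ∀ t ∈ Icc (0 : ℝ) T, HasDerivWithinAt x' (x'' t) (Icc 0 T) t)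
    (hc'' : ContinuousOn x'' (Icc 0 T))
    {a τ : ℝ} (ha : 0 ≤ a) (hτ : 0 ≤ τ) (hb : a + τ ≤ T) :
    ∫ s in a..a + τ, (s - a) • x'' s = τ • x' (a + τ) - (x (a + τ) - x a) := by
  have key := ftc_sub (T := T) (fun s => (s - a) • x' s - x s)
    (fun s => (s - a) • x'' s) ?_ ?_ ha (le_add_of_nonneg_right hτ) hb
  · rw [key]; simp; abel
  · intro t ht
    have h1 : HasDerivWithinAt (fun s : ℝ => s - a) 1 (Icc 0 T) t :=
      ((hasDerivAt_id t).sub_const a).hasDerivWithinAt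
    have h2 := (h1.smul (hx'' t ht)).sub (hx' t ht)
    convert h2 using 1
    · rfl
    · simp
  · exact ((continuous_id.sub continuous_const).continuousOn).smul hc''

lemma aux3 (hx''' : ∀ t ∈ Icc (0 : ℝ) T, HasDerivWithinAt x'' (x''' t) (Icc 0 T) t)
    (hc'' : ContinuousOn x'' (Icc 0 T)) (hc''' : ContinuousOn x''' (Icc 0 T))
    {a τ : ℝ} (ha : 0 ≤ a) (hτ : 0 ≤ τ) (hb : a + τ ≤ T) :
    ∫ s in a..a + τ, (s - a) • x'' s
      = (τ ^ 2 / 2) • x'' (a + τ) - ∫ s in a..a + τ, ((s - a) ^ 2 / 2) • x''' s := by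
  have hsub : Icc a (a + τ) ⊆ Icc 0 T := Icc_subset_Icc ha hb
  have key := ftc_sub (T := T) (fun s => ((s - a) ^ 2 / 2) • x'' s)
    (fun s => ((s - a) ^ 2 / 2) • x''' s + (s - a) • x'' s) ?_ ?_ ha
    (le_add_of_nonneg_right hτ) hb
  · rw [intervalIntegral.integral_add] at key
    · rw [eq_sub_iff_add_eq, add_comm, key]
      simp
    · exact (((continuous_id.sub continuous_const).pow 2).div_const 2).continuousOn.smul
        (hc'''.mono hsub) |>.intervalIntegrable_of_Icc (le_add_of_nonneg_right hτ)
    · exact (((continuous_id.sub continuous_const)).continuousOn.smul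
        (hc''.mono hsub)) |>.intervalIntegrable_of_Icc (le_add_of_nonneg_right hτ)
  · intro t ht
    have h1 : HasDerivWithinAt (fun s : ℝ => (s - a) ^ 2 / 2) (t - a) (Icc 0 T) t := by
      have := (((hasDerivAt_id t).sub_const a).pow 2).div_const 2
      convert this.hasDerivWithinAt using 1
      · rfl
      · rfl
      · rfl
      · simp
    exact h1.smul (hx''' t ht)
  · exact ((((continuous_id.sub continuous_const).pow 2).div_const 2).continuousOn.smul hc''').add
      (((continuous_id.sub continuous_const)).continuousOn.smul hc'')

lemma aux4 (hx''' : ∀ t ∈ Icc (0 : ℝ) T, HasDerivWithinAt x'' (x''' t) (Icc 0 T) t)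
    (hc'' : ContinuousOn x'' (Icc 0 T)) (hc''' : ContinuousOn x''' (Icc 0 T))
    {a τ : ℝ} (ha : 0 ≤ a) (hτ : 0 ≤ τ) (hb : a + τ ≤ T) :
    ∫ s in a..a + τ, (s - a) • x'' s
      = (∫ s in a..a + τ, ((τ ^ 2 - (s - a) ^ 2) / 2) • x''' s) + (τ ^ 2 / 2) • x'' a := by
  have hsub : Icc a (a + τ) ⊆ Icc 0 T := Icc_subset_Icc ha hb
  have key := ftc_sub (T := T) (fun s => ((τ ^ 2 - (s - a) ^ 2) / 2) • x'' s)
    (fun s => ((τ ^ 2 - (s - a) ^ 2) / 2) • x''' s + (-(s - a)) • x'' s) ?_ ?_ ha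
    (le_add_of_nonneg_right hτ) hb
  · rw [intervalIntegral.integral_add] at key
    · have hneg : ∫ s in a..a + τ, (-(s - a)) • x'' s = -∫ s in a..a + τ, (s - a) • x'' s := by
        rw [← intervalIntegral.integral_neg]
        congr 1; funext s; rw [neg_smul]
      rw [hneg] at key
      have : (τ ^ 2 - (a + τ - a) ^ 2) / 2 = 0 := by ring_nf
      simp only [this, zero_smul, sub_sub_cancel_left] at key
      -- key : (∫ w₂•x''') - ∫ (s-a)•x'' = 0 - ((τ²-(a-a)²)/2)•x'' a
      have h0 : (τ ^ 2 - (a - a) ^ 2) / 2 = τ ^ 2 / 2 := by ring_nf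
      rw [h0, ← sub_eq_add_neg, zero_sub, sub_eq_iff_eq_add] at key
      rw [key]; abel
    · exact ((continuous_const.sub ((continuous_id.sub continuous_const).pow 2)).div_const
        2).continuousOn.smul (hc'''.mono hsub) |>.intervalIntegrable_of_Icc
        (le_add_of_nonneg_right hτ)
    · exact (((continuous_id.sub continuous_const).neg).continuousOn.smul
        (hc''.mono hsub)) |>.intervalIntegrable_of_Icc (le_add_of_nonneg_right hτ)
  · intro t ht
    have h1 : HasDerivWithinAt (fun s : ℝ => (τ ^ 2 - (s - a) ^ 2) / 2) (-(t - a)) (Icc 0 T) t := by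
      have := ((((hasDerivAt_id t).sub_const a).pow 2).const_sub (τ ^ 2)).div_const 2
      convert this.hasDerivWithinAt using 1
      · rfl
      · rfl
      · rfl
      · simp; ring
    exact h1.smul (hx''' t ht)
  · exact (((continuous_const.sub ((continuous_id.sub continuous_const).pow 2)).div_const
      2).continuousOn.smul hc''').add
      (((continuous_id.sub continuous_const).neg).continuousOn.smul hc'')

end ident

section ident2
variable {E : Type*} [NormedAddCommGroup E] [NormedSpace ℝ E] [CompleteSpace E]
variable {T : ℝ} {x x' x'' x''' : ℝ → E}

lemma ident (hx' : ∀ t ∈ Icc (0 : ℝ) T, HasDerivWithinAt x (x' t) (Icc 0 T) t)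
    (hx'' : ∀ t ∈ Icc (0 : ℝ) T, HasDerivWithinAt x' (x'' t) (Icc 0 T) t)
    (hx''' : ∀ t ∈ Icc (0 : ℝ) T, HasDerivWithinAt x'' (x''' t) (Icc 0 T) t)
    (hc'' : ContinuousOn x'' (Icc 0 T)) (hc''' : ContinuousOn x''' (Icc 0 T))
    {a τ : ℝ} (ha : 0 ≤ a) (hτ : 0 < τ) (hb : a + 2 * τ ≤ T) :
    τ • ((x' (a + 2 * τ) - τ⁻¹ • (x (a + 2 * τ) - x (a + τ)))
        - (x' (a + τ) - τ⁻¹ • (x (a + τ) - x a)))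
      = (∫ s in a..a + τ, ((s - a) ^ 2 / 2) • x''' s)
        + ∫ s in a + τ..a + τ + τ, ((τ ^ 2 - (s - (a + τ)) ^ 2) / 2) • x''' s := by
  have hne : τ ≠ 0 := hτ.ne'
  have h2τ : a + 2 * τ = a + τ + τ := by ring
  have hb1 : a + τ ≤ T := by linarith
  have ha1 : (0 : ℝ) ≤ a + τ := by linarith
  have hb2 : a + τ + τ ≤ T := by linarith
  have e1 := aux2 hx' hx'' hc'' ha hτ.le hb1
  have e2 := aux2 hx' hx'' hc'' ha1 hτ.le hb2
  have e3 := aux3 hx''' hc'' hc''' ha hτ.le hb1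
  have e4 := aux4 hx''' hc'' hc''' ha1 hτ.le hb2
  have E2 := e2.symm.trans e4
  have E1 := e1.symm.trans e3
  rw [h2τ]
  calc τ • ((x' (a + τ + τ) - τ⁻¹ • (x (a + τ + τ) - x (a + τ)))
        - (x' (a + τ) - τ⁻¹ • (x (a + τ) - x a)))
      = (τ • x' (a + τ + τ) - (x (a + τ + τ) - x (a + τ)))
        - (τ • x' (a + τ) - (x (a + τ) - x a)) := by
        simp only [smul_sub, smul_inv_smul₀ hne]
  _ = ((∫ s in a + τ..a + τ + τ, ((τ ^ 2 - (s - (a + τ)) ^ 2) / 2) • x''' s)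
        + (τ ^ 2 / 2) • x'' (a + τ))
      - ((τ ^ 2 / 2) • x'' (a + τ) - ∫ s in a..a + τ, ((s - a) ^ 2 / 2) • x''' s) := by
        rw [E2, E1]
  _ = (∫ s in a..a + τ, ((s - a) ^ 2 / 2) • x''' s)
        + ∫ s in a + τ..a + τ + τ, ((τ ^ 2 - (s - (a + τ)) ^ 2) / 2) • x''' s := by abel

lemma piece_bound (hc''' : ContinuousOn x''' (Icc 0 T))
    {a τ : ℝ} (ha : 0 ≤ a) (hτ : 0 < τ) (hb : a + 2 * τ ≤ T) (D : E)
    (hD : τ • D = (∫ s in a..a + τ, ((s - a) ^ 2 / 2) • x''' s)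
        + ∫ s in a + τ..a + τ + τ, ((τ ^ 2 - (s - (a + τ)) ^ 2) / 2) • x''' s) :
    τ * ‖τ⁻¹ • D‖ ^ 2 ≤ τ ^ 2 * ((1 / 10) * (∫ s in a..a + τ, ‖x''' s‖ ^ 2)
      + (4 / 15) * ∫ s in a + τ..a + τ + τ, ‖x''' s‖ ^ 2) := by
  have hab1 : a ≤ a + τ := by linarith
  have hab2 : a + τ ≤ a + τ + τ := by linarith
  have hsub1 : Icc a (a + τ) ⊆ Icc 0 T := Icc_subset_Icc ha (by linarith)
  have hsub2 : Icc (a + τ) (a + τ + τ) ⊆ Icc 0 T := Icc_subset_Icc (by linarith) (by linarith)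
  set I₁ := ∫ s in a..a + τ, ‖x''' s‖ ^ 2 with hI₁
  set I₂ := ∫ s in a + τ..a + τ + τ, ‖x''' s‖ ^ 2 with hI₂
  set V₁ := ∫ s in a..a + τ, ((s - a) ^ 2 / 2) • x''' s with hV₁
  set V₂ := ∫ s in a + τ..a + τ + τ, ((τ ^ 2 - (s - (a + τ)) ^ 2) / 2) • x''' s with hV₂
  -- norm bounds via |w| and Cauchy–Schwarz
  have hw1c : ContinuousOn (fun s : ℝ => |(s - a) ^ 2 / 2|) (Icc a (a + τ)) :=
    ((((continuous_id.sub continuous_const).pow 2).div_const 2).abs).continuousOn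
  have hw2c : ContinuousOn (fun s : ℝ => |(τ ^ 2 - (s - (a + τ)) ^ 2) / 2|)
      (Icc (a + τ) (a + τ + τ)) :=
    (((continuous_const.sub ((continuous_id.sub continuous_const).pow 2)).div_const 2).abs).continuousOn
  have hfc1 : ContinuousOn (fun s => ‖x''' s‖) (Icc a (a + τ)) := (hc'''.mono hsub1).norm
  have hfc2 : ContinuousOn (fun s => ‖x''' s‖) (Icc (a + τ) (a + τ + τ)) := (hc'''.mono hsub2).norm
  have n1 : ‖V₁‖ ≤ ∫ s in a..a + τ, |(s - a) ^ 2 / 2| * ‖x''' s‖ := by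
    refine le_trans (intervalIntegral.norm_integral_le_integral_norm hab1) ?_
    refine le_of_eq (intervalIntegral.integral_congr fun s _ => ?_)
    rw [norm_smul, Real.norm_eq_abs]
  have n2 : ‖V₂‖ ≤ ∫ s in a + τ..a + τ + τ, |(τ ^ 2 - (s - (a + τ)) ^ 2) / 2| * ‖x''' s‖ := by
    refine le_trans (intervalIntegral.norm_integral_le_integral_norm hab2) ?_
    refine le_of_eq (intervalIntegral.integral_congr fun s _ => ?_)
    rw [norm_smul, Real.norm_eq_abs]
  have cs1 := cs_interval_s9 hab1 hw1c hfc1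
  have cs2 := cs_interval_s9 hab2 hw2c hfc2
  -- rewrite |w|^2 = w^2 and ‖f‖^2
  have habs1 : (∫ s in a..a + τ, |(s - a) ^ 2 / 2| ^ 2) = ∫ s in a..a + τ, ((s - a) ^ 2 / 2) ^ 2 :=
    intervalIntegral.integral_congr fun s _ => sq_abs _
  have habs2 : (∫ s in a + τ..a + τ + τ, |(τ ^ 2 - (s - (a + τ)) ^ 2) / 2| ^ 2)
      = ∫ s in a + τ..a + τ + τ, ((τ ^ 2 - (s - (a + τ)) ^ 2) / 2) ^ 2 :=
    intervalIntegral.integral_congr fun s _ => sq_abs _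
  rw [habs1] at cs1
  rw [habs2] at cs2
  -- polynomial integrals
  have J1 : (∫ s in a..a + τ, ((s - a) ^ 2 / 2) ^ 2) = τ ^ 5 / 20 := by
    have hcomp := intervalIntegral.integral_comp_sub_right (a := a) (b := a + τ)
      (fun u : ℝ => (u ^ 2 / 2) ^ 2) a
    simp only [add_sub_cancel_left, sub_self] at hcomp
    rw [hcomp]
    have : (fun u : ℝ => (u ^ 2 / 2) ^ 2) = fun u : ℝ => u ^ 4 / 4 := by funext u; ring
    rw [this, intervalIntegral.integral_div, integral_pow]
    norm_num
    ring
  have J2 : (∫ s in a + τ..a + τ + τ, ((τ ^ 2 - (s - (a + τ)) ^ 2) / 2) ^ 2) = 2 * τ ^ 5 / 15 := by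
    have hcomp := intervalIntegral.integral_comp_sub_right (a := a + τ) (b := a + τ + τ)
      (fun u : ℝ => ((τ ^ 2 - u ^ 2) / 2) ^ 2) (a + τ)
    simp only [add_sub_cancel_left, sub_self] at hcomp
    rw [hcomp]
    have he : (fun u : ℝ => ((τ ^ 2 - u ^ 2) / 2) ^ 2)
        = fun u : ℝ => τ ^ 4 / 4 - (τ ^ 2 / 2) * u ^ 2 + u ^ 4 / 4 := by funext u; ring
    rw [he]
    rw [intervalIntegral.integral_add ((by fun_prop : Continuous fun u : ℝ =>
        τ ^ 4 / 4 - τ ^ 2 / 2 * u ^ 2).intervalIntegrable _ _)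
        (((continuous_pow 4).div_const 4).intervalIntegrable _ _),
      intervalIntegral.integral_sub (continuous_const.intervalIntegrable _ _)
        ((by fun_prop : Continuous fun u : ℝ => τ ^ 2 / 2 * u ^ 2).intervalIntegrable _ _),
      intervalIntegral.integral_const, intervalIntegral.integral_const_mul,
      intervalIntegral.integral_div, integral_pow, integral_pow]
    simp only [smul_eq_mul]
    ring
  rw [J1] at cs1
  rw [J2] at cs2
  -- combine
  have hI₁0 : 0 ≤ I₁ := intervalIntegral.integral_nonneg hab1 fun s _ => sq_nonneg _
  have hI₂0 : 0 ≤ I₂ := intervalIntegral.integral_nonneg hab2 fun s _ => sq_nonneg _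
  have h1 : ‖V₁‖ ^ 2 ≤ τ ^ 5 / 20 * I₁ :=
    le_trans (pow_le_pow_left₀ (norm_nonneg _) n1 2) cs1
  have h2 : ‖V₂‖ ^ 2 ≤ 2 * τ ^ 5 / 15 * I₂ :=
    le_trans (pow_le_pow_left₀ (norm_nonneg _) n2 2) cs2
  have hDn : τ * ‖D‖ ≤ ‖V₁‖ + ‖V₂‖ := by
    calc τ * ‖D‖ = ‖τ • D‖ := by
          rw [norm_smul, Real.norm_eq_abs, abs_of_pos hτ]
    _ = ‖V₁ + V₂‖ := by rw [hD]
    _ ≤ ‖V₁‖ + ‖V₂‖ := norm_add_le _ _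
  have hsq : (τ * ‖D‖) ^ 2 ≤ 2 * ‖V₁‖ ^ 2 + 2 * ‖V₂‖ ^ 2 := by
    nlinarith [sq_nonneg (‖V₁‖ - ‖V₂‖), norm_nonneg D, mul_nonneg hτ.le (norm_nonneg D)]
  have hkey : τ ^ 2 * ‖D‖ ^ 2 ≤ τ ^ 5 / 10 * I₁ + 4 * τ ^ 5 / 15 * I₂ := by nlinarith
  have hnorm : ‖τ⁻¹ • D‖ = τ⁻¹ * ‖D‖ := by
    rw [norm_smul, Real.norm_eq_abs, abs_of_pos (by positivity)]
  rw [hnorm, mul_pow]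
  have hτ2 : (0 : ℝ) < τ ^ 2 := by positivity
  have hgoal : ‖D‖ ^ 2 ≤ τ ^ 3 * (1 / 10 * I₁ + 4 / 15 * I₂) := by
    have h5 : τ ^ 2 * ‖D‖ ^ 2 ≤ τ ^ 2 * (τ ^ 3 * (1 / 10 * I₁ + 4 / 15 * I₂)) := by
      calc τ ^ 2 * ‖D‖ ^ 2 ≤ τ ^ 5 / 10 * I₁ + 4 * τ ^ 5 / 15 * I₂ := hkey
      _ = τ ^ 2 * (τ ^ 3 * (1 / 10 * I₁ + 4 / 15 * I₂)) := by ring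
    exact le_of_mul_le_mul_left h5 hτ2
  calc τ * ((τ⁻¹) ^ 2 * ‖D‖ ^ 2) ≤ τ * ((τ⁻¹) ^ 2 * (τ ^ 3 * (1 / 10 * I₁ + 4 / 15 * I₂))) := by
        apply mul_le_mul_of_nonneg_left (mul_le_mul_of_nonneg_left hgoal (by positivity)) hτ.le
  _ = τ ^ 2 * (1 / 10 * I₁ + 4 / 15 * I₂) := by field_simp

end ident2

/-- Lemma 3.2 (ii): L² bound for the backward difference of the consistency
error. -/
theorem consistency_error_difference_l2_bound
    {E : Type*} [NormedAddCommGroup E] [NormedSpace ℝ E] [CompleteSpace E]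
    (T : ℝ) (hT : 0 < T) (N : ℕ) (hN : 2 ≤ N) (τ : ℝ) (hτ : τ = T / N)
    (x x' x'' x''' : ℝ → E)
    (hx' : ∀ t ∈ Icc (0 : ℝ) T, HasDerivWithinAt x (x' t) (Icc 0 T) t)
    (hx'' : ∀ t ∈ Icc (0 : ℝ) T, HasDerivWithinAt x' (x'' t) (Icc 0 T) t)
    (hx''' : ∀ t ∈ Icc (0 : ℝ) T, HasDerivWithinAt x'' (x''' t) (Icc 0 T) t)
    (hc' : ContinuousOn x' (Icc 0 T))
    (hc'' : ContinuousOn x'' (Icc 0 T))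
    (hc''' : ContinuousOn x''' (Icc 0 T))
    (R : ℕ → E)
    (hR : ∀ k, 1 ≤ k → k ≤ N →
      R k = x' ((k : ℝ) * τ) - τ⁻¹ • (x ((k : ℝ) * τ) - x (((k : ℝ) - 1) * τ))) :
    ∑ k ∈ Finset.Icc 2 N, τ * ‖τ⁻¹ • (R k - R (k - 1))‖ ^ 2 ≤
      2 / 3 * τ ^ 2 * ∫ s in (0 : ℝ)..T, ‖x''' s‖ ^ 2 := by
  have hN0 : (0 : ℝ) < N := by positivity
  have hτpos : 0 < τ := by rw [hτ]; positivity
  have hNτ : (N : ℝ) * τ = T := by rw [hτ]; field_simp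
  have hgc : ContinuousOn (fun s => ‖x''' s‖ ^ 2) (Icc 0 T) := (hc'''.norm).pow 2
  set G := ∫ s in (0 : ℝ)..T, ‖x''' s‖ ^ 2 with hG
  have hG0 : 0 ≤ G := intervalIntegral.integral_nonneg hT.le fun s _ => sq_nonneg _
  have hGint : IntervalIntegrable (fun s => ‖x''' s‖ ^ 2) volume 0 T :=
    hgc.intervalIntegrable_of_Icc hT.le
  -- per-term bound
  have hterm : ∀ k ∈ Finset.Icc 2 N, τ * ‖τ⁻¹ • (R k - R (k - 1))‖ ^ 2 ≤
      τ ^ 2 * ((1 / 10) * (∫ s in (((k : ℝ) - 2) * τ)..(((k : ℝ) - 2) * τ + τ), ‖x''' s‖ ^ 2)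
        + (4 / 15) * ∫ s in (((k : ℝ) - 2) * τ + τ)..(((k : ℝ) - 2) * τ + τ + τ),
            ‖x''' s‖ ^ 2) := by
    intro k hk
    obtain ⟨hk2, hkN⟩ := Finset.mem_Icc.mp hk
    have hk1 : 1 ≤ k := le_trans one_le_two hk2
    have hkm1 : 1 ≤ k - 1 := by omega
    have hkmN : k - 1 ≤ N := by omega
    have hcast : ((k - 1 : ℕ) : ℝ) = (k : ℝ) - 1 := by
      push_cast [Nat.cast_sub hk1]; ring
    have hk2' : (2 : ℝ) ≤ (k : ℝ) := by exact_mod_cast hk2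
    have hkN' : ((k : ℝ)) ≤ (N : ℝ) := by exact_mod_cast hkN
    have ha : 0 ≤ ((k : ℝ) - 2) * τ := mul_nonneg (by linarith) hτpos.le
    have hb : ((k : ℝ) - 2) * τ + 2 * τ ≤ T := by
      have : ((k : ℝ) - 2) * τ + 2 * τ = (k : ℝ) * τ := by ring
      rw [this, ← hNτ]
      exact mul_le_mul_of_nonneg_right hkN' hτpos.le
    have hD : τ • (R k - R (k - 1))
        = (∫ s in (((k : ℝ) - 2) * τ)..(((k : ℝ) - 2) * τ + τ),
              ((s - ((k : ℝ) - 2) * τ) ^ 2 / 2) • x''' s)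
          + ∫ s in (((k : ℝ) - 2) * τ + τ)..(((k : ℝ) - 2) * τ + τ + τ),
              ((τ ^ 2 - (s - (((k : ℝ) - 2) * τ + τ)) ^ 2) / 2) • x''' s := by
      have e2 : (k : ℝ) * τ = ((k : ℝ) - 2) * τ + 2 * τ := by ring
      have e1 : ((k : ℝ) - 1) * τ = ((k : ℝ) - 2) * τ + τ := by ring
      have e0 : (((k : ℝ) - 1) - 1) * τ = ((k : ℝ) - 2) * τ := by ring
      rw [hR k hk1 hkN, hR (k - 1) hkm1 hkmN, hcast, e2, e1, e0]
      exact ident hx' hx'' hx''' hc'' hc''' ha hτpos hb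
    exact piece_bound hc''' ha hτpos hb _ hD
  refine le_trans (Finset.sum_le_sum hterm) ?_
  -- split the sum
  set A : ℕ → ℝ := fun k => ∫ s in (((k : ℝ) - 2) * τ)..(((k : ℝ) - 2) * τ + τ), ‖x''' s‖ ^ 2
    with hA
  set B : ℕ → ℝ := fun k =>
    ∫ s in (((k : ℝ) - 2) * τ + τ)..(((k : ℝ) - 2) * τ + τ + τ), ‖x''' s‖ ^ 2 with hB
  have hsplit : ∑ k ∈ Finset.Icc 2 N, τ ^ 2 * ((1 / 10) * A k + (4 / 15) * B k)
      = τ ^ 2 / 10 * (∑ k ∈ Finset.Icc 2 N, A k)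
        + 4 * τ ^ 2 / 15 * ∑ k ∈ Finset.Icc 2 N, B k := by
    rw [Finset.mul_sum, Finset.mul_sum, ← Finset.sum_add_distrib]
    exact Finset.sum_congr rfl fun k _ => by ring
  rw [hsplit]
  have hintc : ∀ (c d : ℝ), 0 ≤ c → c ≤ d → d ≤ T →
      IntervalIntegrable (fun s => ‖x''' s‖ ^ 2) volume c d := fun c d h1 h2 h3 =>
    (hgc.mono (Icc_subset_Icc h1 h3)).intervalIntegrable_of_Icc h2
  have hNm : N + 1 - 2 = N - 1 := by omega
  have hcastN : ((N - 1 : ℕ) : ℝ) = (N : ℝ) - 1 := by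
    push_cast [Nat.cast_sub (le_trans one_le_two hN)]; ring
  have hN1R : (1 : ℝ) ≤ (N : ℝ) := by exact_mod_cast le_trans one_le_two hN
  -- telescoping sums
  have hS1 : ∑ k ∈ Finset.Icc 2 N, A k
      = ∫ s in ((fun i : ℕ => (i : ℝ) * τ) 0)..((fun i : ℕ => (i : ℝ) * τ) (N - 1)),
          ‖x''' s‖ ^ 2 := by
    rw [← Finset.Ico_add_one_right_eq_Icc, Finset.sum_Ico_eq_sum_range, hNm]
    have hcong : ∀ j ∈ Finset.range (N - 1), A (2 + j)
        = ∫ s in ((fun i : ℕ => (i : ℝ) * τ) j)..((fun i : ℕ => (i : ℝ) * τ) (j + 1)),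
            ‖x''' s‖ ^ 2 := by
      intro j hj
      simp only [hA]
      congr 1 <;> push_cast <;> ring
    rw [Finset.sum_congr rfl hcong]
    apply intervalIntegral.sum_integral_adjacent_intervals
    intro j hj
    apply hintc <;> [positivity; skip; skip]
    · have : ((j : ℝ)) ≤ (j : ℝ) + 1 := by linarith
      exact mul_le_mul_of_nonneg_right (by push_cast; linarith) hτpos.le
    · rw [← hNτ]
      apply mul_le_mul_of_nonneg_right _ hτpos.le
      push_cast
      have : (j : ℝ) < ((N - 1 : ℕ) : ℝ) := by exact_mod_cast hj
      rw [hcastN] at this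
      linarith
  have hS2 : ∑ k ∈ Finset.Icc 2 N, B k
      = ∫ s in ((fun i : ℕ => ((i : ℝ) + 1) * τ) 0)..((fun i : ℕ => ((i : ℝ) + 1) * τ) (N - 1)),
          ‖x''' s‖ ^ 2 := by
    rw [← Finset.Ico_add_one_right_eq_Icc, Finset.sum_Ico_eq_sum_range, hNm]
    have hcong : ∀ j ∈ Finset.range (N - 1), B (2 + j)
        = ∫ s in ((fun i : ℕ => ((i : ℝ) + 1) * τ) j)..((fun i : ℕ => ((i : ℝ) + 1) * τ) (j + 1)),
            ‖x''' s‖ ^ 2 := by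
      intro j hj
      simp only [hB]
      congr 1 <;> push_cast <;> ring
    rw [Finset.sum_congr rfl hcong]
    apply intervalIntegral.sum_integral_adjacent_intervals
    intro j hj
    apply hintc <;> [positivity; skip; skip]
    · exact mul_le_mul_of_nonneg_right (by push_cast; linarith) hτpos.le
    · rw [← hNτ]
      apply mul_le_mul_of_nonneg_right _ hτpos.le
      push_cast
      have : j + 2 ≤ N := by omega
      have : (j : ℝ) + 2 ≤ (N : ℝ) := by exact_mod_cast this
      linarith
  rw [hS1, hS2]
  simp only [Nat.cast_zero, zero_mul, zero_add, one_mul, hcastN]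
  have hnn : 0 ≤ᵐ[volume.restrict (Ioc (0 : ℝ) T)] fun s => ‖x''' s‖ ^ 2 :=
    Filter.Eventually.of_forall fun s => sq_nonneg _
  have hb1 : ((N : ℝ) - 1) * τ ≤ T := by
    rw [← hNτ]
    exact mul_le_mul_of_nonneg_right (by linarith) hτpos.le
  have L1 : (∫ s in (0 : ℝ)..((N : ℝ) - 1) * τ, ‖x''' s‖ ^ 2) ≤ G :=
    intervalIntegral.integral_mono_interval le_rfl
      (mul_nonneg (by linarith) hτpos.le) hb1 hnn hGint
  have L2 : (∫ s in τ..((N : ℝ) - 1 + 1) * τ, ‖x''' s‖ ^ 2) ≤ G := by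
    have he : ((N : ℝ) - 1 + 1) * τ = T := by rw [← hNτ]; ring
    rw [he]
    exact intervalIntegral.integral_mono_interval hτpos.le
      (by rw [← hNτ]; nlinarith) le_rfl hnn hGint
  have c1 : (0 : ℝ) ≤ τ ^ 2 / 10 := by positivity
  have c2 : (0 : ℝ) ≤ 4 * τ ^ 2 / 15 := by positivity
  nlinarith [mul_le_mul_of_nonneg_left L1 c1, mul_le_mul_of_nonneg_left L2 c2,
    mul_nonneg (sq_nonneg τ) hG0]
end
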